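/- arXiv:1107.5980 — 3 statements merged into one kernel-verified Lean document; each statement's English description precedes it below -/
import Mathlib

section
/- The relation ≿ms on multisets of integers is a total quasi-order whose strict part is ≻ms: ≿ms is reflexive and transitive, for all S, T either S ≿ms T or T ≿ms S, and for all S, T one has S ≻ms T if and only if (S ≿ms T and ¬ T ≿ms S). In particular, ≻ms is transitive and irreflexive, and any two distinct multisets of integers are comparable by ≻ms. -/
/-- The maximum of a multiset of integers (0 for the empty multiset; only used on nonempty ones). -/
def mmax (S : Multiset ℤ) : ℤ := WithBot.unbotD 0 ((S.map (fun x => (x : WithBot ℤ))).sup)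

/-- The minimum of a multiset of integers (0 for the empty multiset; only used on nonempty ones). -/
def mmin (S : Multiset ℤ) : ℤ := WithTop.untopD 0 ((S.map (fun x => (x : WithTop ℤ))).inf)

/-- max order, weak: S ≿max T. -/
def geMax (S T : Multiset ℤ) : Prop := T = 0 ∨ (S ≠ 0 ∧ T ≠ 0 ∧ mmax S ≥ mmax T)

/-- max order, strict: S ≻max T. -/
def gtMax (S T : Multiset ℤ) : Prop := (S ≠ 0 ∧ T ≠ 0 ∧ mmax S > mmax T) ∨ (S ≠ 0 ∧ T = 0)

/-- min order, weak: S ≿min T. -/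
def geMin (S T : Multiset ℤ) : Prop := S = 0 ∨ (S ≠ 0 ∧ T ≠ 0 ∧ mmin S ≥ mmin T)

/-- min order, strict: S ≻min T. -/
def gtMin (S T : Multiset ℤ) : Prop := (S ≠ 0 ∧ T ≠ 0 ∧ mmin S > mmin T) ∨ (S = 0 ∧ T ≠ 0)

/-- multiset order, strict: S ≻ms T. -/
def gtMS (S T : Multiset ℤ) : Prop :=
  ∃ W U V : Multiset ℤ, U ≠ 0 ∧ S = W + U ∧ T = W + V ∧ gtMax U V

/-- multiset order, weak: S ≿ms T. -/
def geMS (S T : Multiset ℤ) : Prop := gtMS S T ∨ S = T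

/-- dual multiset order, strict: S ≻dms T. -/
def gtDMS (S T : Multiset ℤ) : Prop :=
  ∃ W U V : Multiset ℤ, V ≠ 0 ∧ S = W + U ∧ T = W + V ∧ gtMin U V

/-- dual multiset order, weak: S ≿dms T. -/
def geDMS (S T : Multiset ℤ) : Prop := gtDMS S T ∨ S = T

lemma mmax_eq (S : Multiset ℤ) :
    mmax S = WithBot.unbotD 0 ((S.map (fun x : ℤ => (WithBot.some x))).sup) := by
  simp [mmax, Multiset.pure_def, Multiset.bind_def, Multiset.bind_singleton]

lemma sup_mem' (s : Multiset (WithBot ℤ)) (h : s ≠ 0) : s.sup ∈ s := by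
  induction s using Multiset.induction with
  | empty => simp at h
  | cons a t ih =>
    rw [Multiset.sup_cons]
    rcases eq_or_ne t 0 with rfl | ht
    · simp
    · rcases le_total a t.sup with h1 | h1
      · rw [sup_eq_right.mpr h1]; exact Multiset.mem_cons_of_mem (ih ht)
      · rw [sup_eq_left.mpr h1]; exact Multiset.mem_cons_self a t

lemma mmax_spec (U : Multiset ℤ) (h : U ≠ 0) : mmax U ∈ U ∧ ∀ x ∈ U, x ≤ mmax U := by
  have hm : (U.map (fun x : ℤ => (WithBot.some x))).sup ∈ U.map (fun x : ℤ => (WithBot.some x)) :=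
    sup_mem' _ (by simpa using h)
  obtain ⟨m, hmU, hme⟩ := Multiset.mem_map.mp hm
  have hmm : mmax U = m := by rw [mmax_eq, ← hme]; rfl
  refine ⟨hmm ▸ hmU, fun x hx => ?_⟩
  have h2 := Multiset.le_sup (Multiset.mem_map_of_mem (fun x : ℤ => (WithBot.some x)) hx)
  rw [← hme] at h2
  exact hmm ▸ WithBot.coe_le_coe.mp h2

/-- Characterization of the strict multiset order: the largest point of count-difference favors S. -/
lemma gtMS_iff (S T : Multiset ℤ) :
    gtMS S T ↔ ∃ a : ℤ, T.count a < S.count a ∧ ∀ b, a < b → S.count b = T.count b := by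
  constructor
  · rintro ⟨W, U, V, hU, rfl, rfl, hmax⟩
    obtain ⟨haU, hUle⟩ := mmax_spec U hU
    set a := mmax U with ha
    have hUb : ∀ b, a < b → U.count b = 0 := fun b hb =>
      Multiset.count_eq_zero.mpr (fun hbU => absurd (hUle b hbU) (not_le.mpr hb))
    rcases hmax with ⟨-, hV, hlt⟩ | ⟨-, rfl⟩
    · obtain ⟨-, hVle⟩ := mmax_spec V hV
      have hVa : ∀ b, mmax V < b → V.count b = 0 := fun b hb =>
        Multiset.count_eq_zero.mpr (fun hbV => absurd (hVle b hbV) (not_le.mpr hb))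
      refine ⟨a, ?_, fun b hb => ?_⟩
      · simp only [Multiset.count_add]
        have h1 : V.count a = 0 := hVa a hlt
        have h2 : 0 < U.count a := Multiset.count_pos.mpr haU
        omega
      · simp only [Multiset.count_add, hUb b hb, hVa b (hlt.trans hb)]
    · refine ⟨a, ?_, fun b hb => ?_⟩
      · simp only [Multiset.count_add]
        have h2 : 0 < U.count a := Multiset.count_pos.mpr haU
        simp only [Multiset.count_zero]
        omega
      · simp only [Multiset.count_add, hUb b hb, Multiset.count_zero]
  · rintro ⟨a, hlt, hab⟩
    refine ⟨S ∩ T, S - S ∩ T, T - S ∩ T, ?_, ?_, ?_, ?_⟩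
    · intro h0
      have : (S - S ∩ T).count a = 0 := by rw [h0]; simp
      rw [Multiset.count_sub, Multiset.count_inter] at this
      omega
    · exact (add_tsub_cancel_of_le (Multiset.inter_le_left)).symm
    · exact (add_tsub_cancel_of_le (Multiset.inter_le_right)).symm
    · have haU : a ∈ S - S ∩ T := by
        rw [← Multiset.count_pos, Multiset.count_sub, Multiset.count_inter]; omega
      have hUne : S - S ∩ T ≠ 0 := fun h0 => by simp [h0] at haU
      rcases eq_or_ne (T - S ∩ T) 0 with hV | hV
      · exact Or.inr ⟨hUne, hV⟩
      · refine Or.inl ⟨hUne, hV, ?_⟩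
        obtain ⟨haU', hUle⟩ := mmax_spec _ hUne
        obtain ⟨hmV, hVle⟩ := mmax_spec _ hV
        have h1 : a ≤ mmax (S - S ∩ T) := hUle a haU
        have h2 : mmax (T - S ∩ T) < a := by
          by_contra hc
          push_neg at hc
          have hpos : 0 < (T - S ∩ T).count (mmax (T - S ∩ T)) := Multiset.count_pos.mpr hmV
          rw [Multiset.count_sub, Multiset.count_inter] at hpos
          rcases lt_or_eq_of_le hc with h | h
          · have := hab _ h
            omega
          · rw [← h] at hpos
            omega
        omega

lemma gtMS_irrefl (S : Multiset ℤ) : ¬ gtMS S S := by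
  rw [gtMS_iff]
  rintro ⟨a, h, -⟩
  exact lt_irrefl _ h

lemma gtMS_trans {S T U : Multiset ℤ} (h1 : gtMS S T) (h2 : gtMS T U) : gtMS S U := by
  rw [gtMS_iff] at h1 h2 ⊢
  obtain ⟨a1, ha1, hb1⟩ := h1
  obtain ⟨a2, ha2, hb2⟩ := h2
  rcases lt_trichotomy a1 a2 with h | h | h
  · refine ⟨a2, ?_, fun b hb => (hb1 b (h.trans hb)).trans (hb2 b hb)⟩
    rw [hb1 a2 h]; exact ha2
  · subst h
    exact ⟨a1, ha2.trans ha1, fun b hb => (hb1 b hb).trans (hb2 b hb)⟩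
  · exact ⟨a1, by rw [← hb2 a1 h]; exact ha1,
      fun b hb => (hb1 b hb).trans (hb2 b (h.trans hb))⟩

lemma gtMS_total {S T : Multiset ℤ} (h : S ≠ T) : gtMS S T ∨ gtMS T S := by
  have hex : ∃ a, S.count a ≠ T.count a := by
    by_contra hc
    push_neg at hc
    exact h (Multiset.ext.mpr hc)
  set F : Finset ℤ := (S.toFinset ∪ T.toFinset).filter (fun a => S.count a ≠ T.count a) with hF
  have hne : F.Nonempty := by
    obtain ⟨a, ha⟩ := hex
    refine ⟨a, Finset.mem_filter.mpr ⟨?_, ha⟩⟩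
    rw [Finset.mem_union, Multiset.mem_toFinset, Multiset.mem_toFinset,
      ← Multiset.count_pos, ← Multiset.count_pos]
    omega
  set m := F.max' hne with hm
  have hmF := F.max'_mem hne
  have hmd : S.count m ≠ T.count m := (Finset.mem_filter.mp hmF).2
  have habove : ∀ b, m < b → S.count b = T.count b := by
    intro b hb
    by_contra hc
    have hbF : b ∈ F := by
      refine Finset.mem_filter.mpr ⟨?_, hc⟩
      rw [Finset.mem_union, Multiset.mem_toFinset, Multiset.mem_toFinset,
        ← Multiset.count_pos, ← Multiset.count_pos]
      omega
    exact absurd (F.le_max' b hbF) (not_le.mpr hb)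
  rcases lt_or_gt_of_ne hmd with h | h
  · exact Or.inr ((gtMS_iff T S).mpr ⟨m, h, fun b hb => (habove b hb).symm⟩)
  · exact Or.inl ((gtMS_iff S T).mpr ⟨m, h, habove⟩)

/-- ≿ms is a total quasi-order whose strict part is ≻ms; in particular ≻ms is
transitive and irreflexive, and any two distinct multisets are comparable by ≻ms. -/
theorem geMS_total_quasiorder :
    (∀ S : Multiset ℤ, geMS S S) ∧
    (∀ S T U : Multiset ℤ, geMS S T → geMS T U → geMS S U) ∧
    (∀ S T : Multiset ℤ, geMS S T ∨ geMS T S) ∧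
    (∀ S T : Multiset ℤ, gtMS S T ↔ (geMS S T ∧ ¬ geMS T S)) ∧
    (∀ S T U : Multiset ℤ, gtMS S T → gtMS T U → gtMS S U) ∧
    (∀ S : Multiset ℤ, ¬ gtMS S S) ∧
    (∀ S T : Multiset ℤ, S ≠ T → gtMS S T ∨ gtMS T S) := by
  refine ⟨fun S => Or.inr rfl, ?_, ?_, ?_, fun S T U => gtMS_trans, gtMS_irrefl, fun S T => gtMS_total⟩
  · rintro S T U (h1 | rfl) (h2 | rfl)
    · exact Or.inl (gtMS_trans h1 h2)
    · exact Or.inl h1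
    · exact Or.inl h2
    · exact Or.inr rfl
  · intro S T
    rcases eq_or_ne S T with rfl | h
    · exact Or.inl (Or.inr rfl)
    · rcases gtMS_total h with h | h
      · exact Or.inl (Or.inl h)
      · exact Or.inr (Or.inl h)
  · intro S T
    constructor
    · intro h
      refine ⟨Or.inl h, ?_⟩
      rintro (h2 | rfl)
      · exact gtMS_irrefl S (gtMS_trans h h2)
      · exact gtMS_irrefl _ h
    · rintro ⟨h1 | rfl, h2⟩
      · exact h1
      · exact absurd (Or.inr rfl) h2
end

section
/- The relation ≿dms on multisets of integers is a total quasi-order whose strict part is ≻dms: ≿dms is reflexive and transitive, for all S, T either S ≿dms T or T ≿dms S, and for all S, T one has S ≻dms T if and only if (S ≿dms T and ¬ T ≿dms S). In particular, ≻dms is transitive and irreflexive, and any two distinct multisets of integers are comparable by ≻dms. -/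
/- ### Auxiliary lemmas -/

lemma mmin_def' (V : Multiset ℤ) : mmin V = WithTop.untopD 0 ((V.map (fun x => WithTop.some x)).inf) := by
  simp [mmin, Multiset.map_id', Bind.bind, Pure.pure, Multiset.bind_singleton]

lemma inf_eq_mmin' {V : Multiset ℤ} (h : V ≠ 0) :
    (V.map (fun x => WithTop.some x)).inf = WithTop.some (mmin V) := by
  obtain ⟨y, hy⟩ := Multiset.exists_mem_of_ne_zero h
  have hle : (V.map (fun x => WithTop.some x)).inf ≤ WithTop.some y :=
    Multiset.inf_le (Multiset.mem_map_of_mem _ hy)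
  rw [mmin_def']
  cases hinf : (V.map (fun x => WithTop.some x)).inf with
  | top => rw [hinf] at hle; simp at hle
  | coe a => rfl

lemma mmin_le' {V : Multiset ℤ} {x : ℤ} (hx : x ∈ V) : mmin V ≤ x := by
  have hne : V ≠ 0 := fun h => by simp [h] at hx
  have h : (V.map (fun x => WithTop.some x)).inf ≤ WithTop.some x :=
    Multiset.inf_le (Multiset.mem_map_of_mem _ hx)
  rw [inf_eq_mmin' hne] at h
  exact_mod_cast h

lemma mmin_mem' {V : Multiset ℤ} (h : V ≠ 0) : mmin V ∈ V := by
  induction V using Multiset.induction with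
  | empty => simp at h
  | cons a s ih =>
    rcases eq_or_ne s 0 with rfl | hs
    · rw [mmin_def']; simp
    · have : mmin (a ::ₘ s) = min a (mmin s) := by
        rw [mmin_def', Multiset.map_cons, Multiset.inf_cons, inf_eq_mmin' hs,
          ← WithTop.coe_min]
        rfl
      rw [this]
      rcases min_choice a (mmin s) with h1 | h1 <;> rw [h1]
      · exact Multiset.mem_cons_self _ _
      · exact Multiset.mem_cons_of_mem (ih hs)

lemma count_eq_zero_of_lt_mmin' {V : Multiset ℤ} {x : ℤ} (hx : x < mmin V) : V.count x = 0 := by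
  rw [Multiset.count_eq_zero]
  intro hmem
  exact absurd (mmin_le' hmem) (not_le.2 hx)

/-- The lexicographic characterization of the strict dual multiset order. -/
def Pdms (S T : Multiset ℤ) : Prop :=
  ∃ m : ℤ, (∀ x, x < m → S.count x = T.count x) ∧ S.count m < T.count m

lemma gtDMS_iff_Pdms (S T : Multiset ℤ) : gtDMS S T ↔ Pdms S T := by
  constructor
  · rintro ⟨W, U, V, hV, rfl, rfl, hUV⟩
    refine ⟨mmin V, ?_, ?_⟩
    · intro x hx
      have hVx : V.count x = 0 := count_eq_zero_of_lt_mmin' hx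
      have hUx : U.count x = 0 := by
        rcases hUV with ⟨hU, -, hgt⟩ | ⟨rfl, -⟩
        · exact count_eq_zero_of_lt_mmin' (hx.trans hgt)
        · simp
      simp [Multiset.count_add, hVx, hUx]
    · have hUx : U.count (mmin V) = 0 := by
        rcases hUV with ⟨hU, -, hgt⟩ | ⟨rfl, -⟩
        · exact count_eq_zero_of_lt_mmin' hgt
        · simp
      have hVx : 0 < V.count (mmin V) := Multiset.count_pos.2 (mmin_mem' hV)
      simp [Multiset.count_add, hUx]
      omega
  · rintro ⟨m, heq, hlt⟩
    refine ⟨S ∩ T, S - S ∩ T, T - S ∩ T, ?_, ?_, ?_, ?_⟩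
    · intro h
      have := congrArg (Multiset.count m) h
      simp [Multiset.count_sub, Multiset.count_inter] at this
      omega
    · rw [add_comm, tsub_add_cancel_of_le ((Multiset.inter_le_left (s := S) (t := T)))]
    · rw [add_comm, tsub_add_cancel_of_le ((Multiset.inter_le_right (s := S) (t := T)))]
    · set U := S - S ∩ T with hU
      set V := T - S ∩ T with hVdef
      have hVcount : ∀ x, V.count x = T.count x - min (S.count x) (T.count x) := by
        intro x; simp [hVdef, Multiset.count_sub, Multiset.count_inter]
      have hUcount : ∀ x, U.count x = S.count x - min (S.count x) (T.count x) := by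
        intro x; simp [hU, Multiset.count_sub, Multiset.count_inter]
      have hVne : V ≠ 0 := by
        intro h
        have := congrArg (Multiset.count m) h
        rw [hVcount] at this
        simp at this
        omega
      have hVmem : ∀ x ∈ V, m ≤ x := by
        intro x hx
        by_contra hc
        push_neg at hc
        have h1 : 0 < V.count x := Multiset.count_pos.2 hx
        rw [hVcount] at h1
        have := heq x hc
        omega
      have hmV : m ∈ V := by
        rw [← Multiset.count_pos, hVcount]
        omega
      have hminV : mmin V = m := le_antisymm (mmin_le' hmV) (hVmem _ (mmin_mem' hVne))
      rcases eq_or_ne U 0 with hU0 | hUne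
      · exact Or.inr ⟨hU0, hVne⟩
      · refine Or.inl ⟨hUne, hVne, ?_⟩
        rw [hminV]
        have hmem := mmin_mem' hUne
        have h1 : 0 < U.count (mmin U) := Multiset.count_pos.2 hmem
        rw [hUcount] at h1
        by_contra hc
        push_neg at hc
        rcases lt_or_eq_of_le hc with h2 | h2
        · have := heq _ h2; omega
        · rw [h2] at h1; omega

lemma Pdms_irrefl (S : Multiset ℤ) : ¬ Pdms S S := by
  rintro ⟨m, -, h⟩; exact lt_irrefl _ h

lemma Pdms_trans {S T U : Multiset ℤ} (h1 : Pdms S T) (h2 : Pdms T U) : Pdms S U := by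
  obtain ⟨m1, he1, hl1⟩ := h1
  obtain ⟨m2, he2, hl2⟩ := h2
  refine ⟨min m1 m2, fun x hx => ?_, ?_⟩
  · rw [lt_min_iff] at hx
    rw [he1 x hx.1, he2 x hx.2]
  · rcases lt_trichotomy m1 m2 with h | h | h
    · rw [min_eq_left h.le, ← he2 m1 h]; exact hl1
    · subst h; rw [min_self]; exact hl1.trans hl2
    · rw [min_eq_right h.le, he1 m2 h]; exact hl2

lemma Pdms_total {S T : Multiset ℤ} (h : S ≠ T) : Pdms S T ∨ Pdms T S := by
  classical
  set D := (S.toFinset ∪ T.toFinset).filter (fun x => S.count x ≠ T.count x) with hD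
  have hmemD : ∀ x : ℤ, S.count x ≠ T.count x → x ∈ D := by
    intro x hx
    refine Finset.mem_filter.2 ⟨?_, hx⟩
    rcases Nat.eq_zero_or_pos (S.count x) with h0 | hpos
    · have : 0 < T.count x := by omega
      exact Finset.mem_union_right _ (Multiset.mem_toFinset.2 (Multiset.count_pos.1 this))
    · exact Finset.mem_union_left _ (Multiset.mem_toFinset.2 (Multiset.count_pos.1 hpos))
  have hne : D.Nonempty := by
    have : ∃ x, S.count x ≠ T.count x := by
      by_contra hc; push_neg at hc; exact h (Multiset.ext.2 hc)
    obtain ⟨x, hx⟩ := this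
    exact ⟨x, hmemD x hx⟩
  set m := D.min' hne with hm
  have hmne : S.count m ≠ T.count m := (Finset.mem_filter.1 (D.min'_mem hne)).2
  have hlt : ∀ x, x < m → S.count x = T.count x := by
    intro x hx
    by_contra hc
    exact absurd (D.min'_le x (hmemD x hc)) (not_le.2 hx)
  rcases lt_or_gt_of_ne hmne with h1 | h1
  · exact Or.inl ⟨m, hlt, h1⟩
  · exact Or.inr ⟨m, fun x hx => (hlt x hx).symm, h1⟩

lemma gtDMS_trans' {S T U : Multiset ℤ} (h1 : gtDMS S T) (h2 : gtDMS T U) : gtDMS S U :=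
  (gtDMS_iff_Pdms S U).2 (Pdms_trans ((gtDMS_iff_Pdms S T).1 h1) ((gtDMS_iff_Pdms T U).1 h2))

lemma gtDMS_irrefl' (S : Multiset ℤ) : ¬ gtDMS S S := fun h =>
  Pdms_irrefl S ((gtDMS_iff_Pdms S S).1 h)

lemma gtDMS_total' {S T : Multiset ℤ} (h : S ≠ T) : gtDMS S T ∨ gtDMS T S := by
  rcases Pdms_total h with h1 | h1
  · exact Or.inl ((gtDMS_iff_Pdms S T).2 h1)
  · exact Or.inr ((gtDMS_iff_Pdms T S).2 h1)

/-- ≿dms is a total quasi-order whose strict part is ≻dms; in particular ≻dms is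
transitive and irreflexive, and any two distinct multisets are comparable by ≻dms. -/
theorem geDMS_total_quasiorder :
    (∀ S : Multiset ℤ, geDMS S S) ∧
    (∀ S T U : Multiset ℤ, geDMS S T → geDMS T U → geDMS S U) ∧
    (∀ S T : Multiset ℤ, geDMS S T ∨ geDMS T S) ∧
    (∀ S T : Multiset ℤ, gtDMS S T ↔ (geDMS S T ∧ ¬ geDMS T S)) ∧
    (∀ S T U : Multiset ℤ, gtDMS S T → gtDMS T U → gtDMS S U) ∧
    (∀ S : Multiset ℤ, ¬ gtDMS S S) ∧
    (∀ S T : Multiset ℤ, S ≠ T → gtDMS S T ∨ gtDMS T S) := by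
  refine ⟨fun S => Or.inr rfl, ?_, ?_, ?_, fun S T U => gtDMS_trans', gtDMS_irrefl',
    fun S T => gtDMS_total'⟩
  · rintro S T U (h1 | rfl) (h2 | rfl)
    · exact Or.inl (gtDMS_trans' h1 h2)
    · exact Or.inl h1
    · exact Or.inl h2
    · exact Or.inr rfl
  · intro S T
    rcases eq_or_ne S T with rfl | h
    · exact Or.inl (Or.inr rfl)
    · rcases gtDMS_total' h with h1 | h1
      · exact Or.inl (Or.inl h1)
      · exact Or.inr (Or.inl h1)
  · intro S T
    constructor
    · intro h
      refine ⟨Or.inl h, ?_⟩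
      rintro (h2 | rfl)
      · exact gtDMS_irrefl' _ (gtDMS_trans' h h2)
      · exact gtDMS_irrefl' _ h
    · rintro ⟨h1 | rfl, h2⟩
      · exact h1
      · exact absurd (Or.inr rfl) h2
end

section
/- Let S and T be nonempty multisets of integers and let −S denote the image of S under x ↦ −x (Multiset.map Neg.neg). Then: if S ≿ms T then (−T) ≿dms (−S); if S ≻ms T then (−T) ≻dms (−S); if S ≿dms T then (−T) ≿ms (−S); and if S ≻dms T then (−T) ≻ms (−S). -/
lemma mmax_singleton (a : ℤ) : mmax {a} = a := by simp [mmax]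
lemma mmin_singleton (a : ℤ) : mmin {a} = a := by simp [mmin]

lemma sup_coe (t : Multiset ℤ) (h : t ≠ 0) :
    ((t.map (fun x : ℤ => (x : WithBot ℤ))).sup) = (mmax t : WithBot ℤ) := by
  obtain ⟨a, ha⟩ := Multiset.exists_mem_of_ne_zero h
  have hle : (a : WithBot ℤ) ≤ (t.map (fun x : ℤ => (x : WithBot ℤ))).sup :=
    Multiset.le_sup (Multiset.mem_map_of_mem _ ha)
  have hne : (t.map (fun x : ℤ => (x : WithBot ℤ))).sup ≠ ⊥ := by
    intro hb; rw [hb] at hle; exact absurd hle (by simp)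
  obtain ⟨y, hy⟩ := WithBot.ne_bot_iff_exists.mp hne
  rw [← hy]; simp [mmax, ← hy]

lemma inf_coe (t : Multiset ℤ) (h : t ≠ 0) :
    ((t.map (fun x : ℤ => (x : WithTop ℤ))).inf) = (mmin t : WithTop ℤ) := by
  obtain ⟨a, ha⟩ := Multiset.exists_mem_of_ne_zero h
  have hle : (t.map (fun x : ℤ => (x : WithTop ℤ))).inf ≤ (a : WithTop ℤ) :=
    Multiset.inf_le (Multiset.mem_map_of_mem _ ha)
  have hne : (t.map (fun x : ℤ => (x : WithTop ℤ))).inf ≠ ⊤ := by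
    intro hb; rw [hb] at hle; exact absurd hle (by simp)
  obtain ⟨y, hy⟩ := WithTop.ne_top_iff_exists.mp hne
  rw [← hy]; simp [mmin, ← hy]

lemma mmax_cons (a : ℤ) (t : Multiset ℤ) (h : t ≠ 0) :
    mmax (a ::ₘ t) = max a (mmax t) := by
  have : ((a ::ₘ t).map (fun x : ℤ => (x : WithBot ℤ))).sup = ((max a (mmax t) : ℤ) : WithBot ℤ) := by
    rw [Multiset.map_cons, Multiset.sup_cons, sup_coe t h]
    exact_mod_cast rfl
  have h2 := sup_coe (a ::ₘ t) (by simp)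
  rw [this] at h2
  exact_mod_cast h2.symm

lemma mmin_cons (a : ℤ) (t : Multiset ℤ) (h : t ≠ 0) :
    mmin (a ::ₘ t) = min a (mmin t) := by
  have : ((a ::ₘ t).map (fun x : ℤ => (x : WithTop ℤ))).inf = ((min a (mmin t) : ℤ) : WithTop ℤ) := by
    rw [Multiset.map_cons, Multiset.inf_cons, inf_coe t h]
    exact_mod_cast rfl
  have h2 := inf_coe (a ::ₘ t) (by simp)
  rw [this] at h2
  exact_mod_cast h2.symm

lemma mmin_neg (S : Multiset ℤ) (h : S ≠ 0) : mmin (S.map Neg.neg) = - mmax S := by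
  induction S using Multiset.induction with
  | empty => exact absurd rfl h
  | cons a s ih =>
    by_cases hs : s = 0
    · subst hs; simp [mmax_singleton, mmin_singleton]
    · have hm : s.map Neg.neg ≠ 0 := by simp [hs]
      rw [Multiset.map_cons, mmin_cons _ _ hm, ih hs, mmax_cons _ _ hs]
      omega

lemma mmax_neg (S : Multiset ℤ) (h : S ≠ 0) : mmax (S.map Neg.neg) = - mmin S := by
  induction S using Multiset.induction with
  | empty => exact absurd rfl h
  | cons a s ih =>
    by_cases hs : s = 0
    · subst hs; simp [mmax_singleton, mmin_singleton]
    · have hm : s.map Neg.neg ≠ 0 := by simp [hs]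
      rw [Multiset.map_cons, mmax_cons _ _ hm, ih hs, mmin_cons _ _ hs]
      omega

lemma gt_conv1 (S T : Multiset ℤ) (h : gtMS S T) :
    gtDMS (T.map Neg.neg) (S.map Neg.neg) := by
  obtain ⟨W, U, V, hU, h1, h2, hmax⟩ := h
  refine ⟨W.map Neg.neg, V.map Neg.neg, U.map Neg.neg, by simpa using hU,
    by rw [h2, Multiset.map_add], by rw [h1, Multiset.map_add], ?_⟩
  rcases hmax with ⟨hU0, hV0, hlt⟩ | ⟨hU0, hV0⟩
  · left
    refine ⟨by simpa using hV0, by simpa using hU0, ?_⟩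
    rw [mmin_neg V hV0, mmin_neg U hU0]; omega
  · right; exact ⟨by simp [hV0], by simpa using hU0⟩

lemma gt_conv2 (S T : Multiset ℤ) (h : gtDMS S T) :
    gtMS (T.map Neg.neg) (S.map Neg.neg) := by
  obtain ⟨W, U, V, hV, h1, h2, hmin⟩ := h
  refine ⟨W.map Neg.neg, V.map Neg.neg, U.map Neg.neg, by simpa using hV,
    by rw [h2, Multiset.map_add], by rw [h1, Multiset.map_add], ?_⟩
  rcases hmin with ⟨hU0, hV0, hlt⟩ | ⟨hU0, hV0⟩
  · left
    refine ⟨by simpa using hV0, by simpa using hU0, ?_⟩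
    rw [mmax_neg V hV0, mmax_neg U hU0]; omega
  · right; exact ⟨by simpa using hV0, by simp [hU0]⟩


/-- Negation swaps the multiset and dual multiset orders. -/
theorem neg_swaps_ms_dms (S T : Multiset ℤ) (hS : S ≠ 0) (hT : T ≠ 0) :
    (geMS S T → geDMS (T.map Neg.neg) (S.map Neg.neg)) ∧
    (gtMS S T → gtDMS (T.map Neg.neg) (S.map Neg.neg)) ∧
    (geDMS S T → geMS (T.map Neg.neg) (S.map Neg.neg)) ∧
    (gtDMS S T → gtMS (T.map Neg.neg) (S.map Neg.neg)) := by
  refine ⟨?_, gt_conv1 S T, ?_, gt_conv2 S T⟩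
  · rintro (h | rfl)
    · exact Or.inl (gt_conv1 S T h)
    · exact Or.inr rfl
  · rintro (h | rfl)
    · exact Or.inl (gt_conv2 S T h)
    · exact Or.inr rfl
end
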